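/- Let B be an N×N complex matrix all of whose eigenvalues have nonnegative real part. Then for every t ≥ 0, the operator norm of e^{-tB} is bounded by C·(1 + t^N ‖B‖^N), where C depends only on N and the chosen norm. -/

import Mathlib

open scoped Matrix

attribute [local instance] Matrix.linftyOpNormedRing Matrix.linftyOpNormedAlgebra

open Polynomial NormedSpace intervalIntegral

/-- iterated "divided difference" functions of `fun t => exp (-t z)` -/
noncomputable def ddexp (lam : ℕ → ℂ) : ℕ → ℝ → ℂ
  | 0 => fun t => Complex.exp (-(t : ℂ) * lam 0)
  | (k+1) => fun t =>
      -(Complex.exp (-(t : ℂ) * lam (k+1))) *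
        ∫ s in (0:ℝ)..t, Complex.exp ((s : ℂ) * lam (k+1)) * ddexp lam k s

lemma cont_aux (c : ℂ) : Continuous fun t : ℝ => Complex.exp ((t : ℂ) * c) := by
  fun_prop

lemma ddexp_cont (lam : ℕ → ℂ) (k : ℕ) : Continuous (ddexp lam k) := by
  induction k with
  | zero =>
    show Continuous fun t : ℝ => Complex.exp (-(t:ℂ) * lam 0)
    fun_prop
  | succ k ih =>
    show Continuous fun t : ℝ => -(Complex.exp (-(t : ℂ) * lam (k+1))) *
        ∫ s in (0:ℝ)..t, Complex.exp ((s : ℂ) * lam (k+1)) * ddexp lam k s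
    have hcont : Continuous fun s : ℝ => Complex.exp ((s : ℂ) * lam (k+1)) * ddexp lam k s := by
      exact ((cont_aux _)).mul ih
    exact (Continuous.neg (by fun_prop)).mul
      (continuous_primitive (fun a b => hcont.intervalIntegrable a b) 0)

lemma ddexp_zero (lam : ℕ → ℂ) (k : ℕ) (h : 0 < k) : ddexp lam k 0 = 0 := by
  obtain ⟨k, rfl⟩ := Nat.exists_eq_succ_of_ne_zero h.ne'
  show -(Complex.exp _) * ∫ s in (0:ℝ)..(0:ℝ), _ = 0
  simp

lemma ddexp_zero' (lam : ℕ → ℂ) : ddexp lam 0 0 = 1 := by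
  show Complex.exp (-(0:ℂ) * lam 0) = 1
  simp

lemma ddexp_hasDerivAt (lam : ℕ → ℂ) (k : ℕ) (t : ℝ) :
    HasDerivAt (ddexp lam k)
      (-(lam k) * ddexp lam k t - (if h : k = 0 then 0 else ddexp lam (k-1) t)) t := by
  cases k with
  | zero =>
    have h1 : HasDerivAt (fun t : ℝ => -(t:ℂ) * lam 0) (-(lam 0)) t := by
      simpa using ((Complex.ofRealCLM.hasDerivAt (x := t)).neg.mul_const (lam 0))
    have h2 := h1.cexp
    rw [show ddexp lam 0 = fun t : ℝ => Complex.exp (-(t:ℂ) * lam 0) from rfl]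
    convert h2 using 1
    rw [dif_pos rfl]
    ring
  | succ k =>
    simp only [Nat.succ_ne_zero, dif_neg, Nat.add_sub_cancel]
    set μ := lam (k+1)
    have hcont : Continuous fun s : ℝ => Complex.exp ((s : ℂ) * μ) * ddexp lam k s :=
      (cont_aux _).mul (ddexp_cont lam k)
    have hH : HasDerivAt (fun u : ℝ => ∫ s in (0:ℝ)..u, Complex.exp ((s : ℂ) * μ) * ddexp lam k s)
        (Complex.exp ((t : ℂ) * μ) * ddexp lam k t) t :=
      integral_hasDerivAt_right (hcont.intervalIntegrable 0 t)
        (hcont.stronglyMeasurableAtFilter _ _) hcont.continuousAt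
    have h1 : HasDerivAt (fun t : ℝ => -(Complex.exp (-(t:ℂ) * μ))) (μ * Complex.exp (-(t:ℂ) * μ)) t := by
      have h0 : HasDerivAt (fun t : ℝ => -(t:ℂ) * μ) (-μ) t := by
        simpa using ((Complex.ofRealCLM.hasDerivAt (x := t)).neg.mul_const μ)
      have := h0.cexp.neg
      exact this.congr_deriv (by ring)
    have key := h1.mul hH
    refine HasDerivAt.congr_deriv key (Eq.symm ?_)
    set I := ∫ s in (0:ℝ)..t, Complex.exp ((s : ℂ) * μ) * ddexp lam k s with hI
    rw [show ddexp lam (k+1) t = -(Complex.exp (-(t : ℂ) * μ)) * I from rfl]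
    rw [show -(Complex.exp (-(t:ℂ) * μ)) * (Complex.exp ((t:ℂ) * μ) * ddexp lam k t)
        = -(Complex.exp ((-(t:ℂ)) * μ + (t:ℂ) * μ) * ddexp lam k t) by rw [Complex.exp_add]; ring]
    rw [show (-(t:ℂ)) * μ + (t:ℂ) * μ = 0 by ring, Complex.exp_zero, dif_neg not_false]
    ring

lemma norm_cexp_le_one {z : ℂ} (hz : z.re ≤ 0) : ‖Complex.exp z‖ ≤ 1 := by
  rw [Complex.norm_exp]
  exact Real.exp_le_one_iff.mpr hz

lemma ddexp_norm_le (lam : ℕ → ℂ) (hRe : ∀ k, 0 ≤ (lam k).re) (k : ℕ) :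
    ∀ t : ℝ, 0 ≤ t → ‖ddexp lam k t‖ ≤ t ^ k := by
  induction k with
  | zero =>
    intro t ht
    rw [pow_zero]
    apply norm_cexp_le_one
    have h : (-(t:ℂ) * lam 0).re = -t * (lam 0).re := by
      simp [Complex.mul_re]
    rw [h]
    exact mul_nonpos_of_nonpos_of_nonneg (by linarith) (hRe 0)
  | succ k ih =>
    intro t ht
    set μ := lam (k+1) with hμ
    have hre : 0 ≤ μ.re := hRe (k+1)
    have key : ddexp lam (k+1) t
        = ∫ s in (0:ℝ)..t, -(Complex.exp (((s:ℂ) - t) * μ) * ddexp lam k s) := by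
      rw [show ddexp lam (k+1) t = -(Complex.exp (-(t : ℂ) * μ)) *
        ∫ s in (0:ℝ)..t, Complex.exp ((s : ℂ) * μ) * ddexp lam k s from rfl]
      rw [← intervalIntegral.integral_const_mul]
      apply intervalIntegral.integral_congr
      intro s _
      show -(Complex.exp (-(t : ℂ) * μ)) * (Complex.exp ((s : ℂ) * μ) * ddexp lam k s)
        = -(Complex.exp (((s:ℂ) - t) * μ) * ddexp lam k s)
      rw [show ((s:ℂ) - t) * μ = (s:ℂ) * μ + (-(t:ℂ)) * μ by ring, Complex.exp_add]
      ring
    rw [key]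
    have hb := intervalIntegral.norm_integral_le_of_norm_le_const (C := t ^ k)
      (f := fun s : ℝ => -(Complex.exp (((s:ℂ) - t) * μ) * ddexp lam k s)) (a := (0:ℝ)) (b := t) ?_
    · calc ‖∫ s in (0:ℝ)..t, -(Complex.exp (((s:ℂ) - t) * μ) * ddexp lam k s)‖
          ≤ t ^ k * |t - 0| := hb
        _ = t ^ (k+1) := by rw [sub_zero, abs_of_nonneg ht, pow_succ]
    · intro x hx
      rw [Set.uIoc_of_le ht] at hx
      obtain ⟨hx0, hxt⟩ := hx
      rw [norm_neg, norm_mul]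
      have h1 : ‖Complex.exp (((x:ℂ) - t) * μ)‖ ≤ 1 := by
        apply norm_cexp_le_one
        have h : (((x:ℂ) - t) * μ).re = (x - t) * μ.re := by
          simp [Complex.mul_re]
        rw [h]
        exact mul_nonpos_of_nonpos_of_nonneg (by linarith) hre
      have h2 : ‖ddexp lam k x‖ ≤ t ^ k :=
        (ih x hx0.le).trans (pow_le_pow_left₀ hx0.le hxt k)
      calc ‖Complex.exp (((x:ℂ) - t) * μ)‖ * ‖ddexp lam k x‖
          ≤ 1 * (t ^ k) := mul_le_mul h1 h2 (norm_nonneg _) zero_le_one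
        _ = t ^ k := one_mul _


section MatrixPart

variable {N : ℕ}

/-- The partial products `∏_{j<k} (B - λ_j)`. -/
noncomputable def Pprod (B : Matrix (Fin N) (Fin N) ℂ) (lam : ℕ → ℂ) (k : ℕ) :
    Matrix (Fin N) (Fin N) ℂ :=
  ((List.range k).map (fun j => B - lam j • 1)).prod

lemma Pprod_zero (B : Matrix (Fin N) (Fin N) ℂ) (lam : ℕ → ℂ) : Pprod B lam 0 = 1 := by
  simp [Pprod]

lemma Pprod_succ (B : Matrix (Fin N) (Fin N) ℂ) (lam : ℕ → ℂ) (k : ℕ) :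
    Pprod B lam (k+1) = Pprod B lam k * (B - lam k • 1) := by
  rw [Pprod, List.range_succ, List.map_append, List.prod_append]
  simp [Pprod]

lemma commute_B_Pprod (B : Matrix (Fin N) (Fin N) ℂ) (lam : ℕ → ℂ) (k : ℕ) :
    Commute B (Pprod B lam k) := by
  apply Commute.list_prod_right
  intro x hx
  obtain ⟨j, -, rfl⟩ := List.mem_map.mp hx
  exact (Commute.refl B).sub_right ((Commute.one_right B).smul_right _)

lemma commute_fac_Pprod (B : Matrix (Fin N) (Fin N) ℂ) (lam : ℕ → ℂ) (μ : ℂ) (k : ℕ) :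
    Commute (B - μ • 1) (Pprod B lam k) := by
  apply Commute.list_prod_right
  intro x hx
  obtain ⟨j, -, rfl⟩ := List.mem_map.mp hx
  exact ((Commute.refl B).sub_right ((Commute.one_right B).smul_right _)).sub_left
    (((Commute.one_left B).sub_right ((Commute.one_right 1).smul_right _)).smul_left _)

lemma B_mul_Pprod (B : Matrix (Fin N) (Fin N) ℂ) (lam : ℕ → ℂ) (k : ℕ) :
    B * Pprod B lam k = lam k • Pprod B lam k + Pprod B lam (k+1) := by
  rw [Pprod_succ, ← (commute_fac_Pprod B lam (lam k) k).eq, sub_mul, smul_mul_assoc, one_mul]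
  abel

end MatrixPart

theorem exp_neg_eq_sum {N : ℕ} (B : Matrix (Fin N) (Fin N) ℂ) (lam : ℕ → ℂ)
    (hN : 0 < N) (hCH : Pprod B lam N = 0) (t : ℝ) :
    NormedSpace.exp ((-t) • B)
      = ∑ k ∈ Finset.range N, ddexp lam k t • Pprod B lam k := by
  set X : ℝ → Matrix (Fin N) (Fin N) ℂ :=
    fun u => ∑ k ∈ Finset.range N, ddexp lam k u • Pprod B lam k with hX
  have hXd : ∀ u : ℝ, HasDerivAt X (-(B * X u)) u := by
    intro u
    have h1 : HasDerivAt X (∑ k ∈ Finset.range N,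
        (-(lam k) * ddexp lam k u - (if h : k = 0 then 0 else ddexp lam (k-1) u))
          • Pprod B lam k) u :=
      HasDerivAt.fun_sum fun k _ => (ddexp_hasDerivAt lam k u).smul_const (Pprod B lam k)
    convert h1 using 1
    have h2 : B * X u = (∑ k ∈ Finset.range N, (lam k * ddexp lam k u) • Pprod B lam k)
        + ∑ k ∈ Finset.range N, ddexp lam k u • Pprod B lam (k+1) := by
      rw [hX, Finset.mul_sum, ← Finset.sum_add_distrib]
      apply Finset.sum_congr rfl
      intro k _
      rw [mul_smul_comm, B_mul_Pprod, smul_add, smul_smul, mul_comm]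
    have h3 : ∑ k ∈ Finset.range N,
          (if h : k = 0 then (0:ℂ) else ddexp lam (k-1) u) • Pprod B lam k
        = ∑ k ∈ Finset.range N, ddexp lam k u • Pprod B lam (k+1) := by
      obtain ⟨M, rfl⟩ := Nat.exists_eq_succ_of_ne_zero hN.ne'
      rw [Finset.sum_range_succ'
        (fun k => (if h : k = 0 then (0:ℂ) else ddexp lam (k-1) u) • Pprod B lam k)]
      rw [Finset.sum_range_succ]
      simp [hCH]
    have expand : ∑ k ∈ Finset.range N,
          (-(lam k) * ddexp lam k u - (if h : k = 0 then 0 else ddexp lam (k-1) u))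
            • Pprod B lam k
        = (-(∑ k ∈ Finset.range N, (lam k * ddexp lam k u) • Pprod B lam k))
            - ∑ k ∈ Finset.range N,
                (if h : k = 0 then (0:ℂ) else ddexp lam (k-1) u) • Pprod B lam k := by
      rw [← Finset.sum_neg_distrib, ← Finset.sum_sub_distrib]
      apply Finset.sum_congr rfl
      intro k _
      rw [sub_smul, neg_mul, neg_smul]
    rw [expand, h3, h2, neg_add, sub_eq_add_neg]
  have hX0 : X 0 = 1 := by
    show ∑ k ∈ Finset.range N, ddexp lam k 0 • Pprod B lam k = 1
    rw [Finset.sum_eq_single 0]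
    · rw [ddexp_zero', Pprod_zero, one_smul]
    · intro k _ hk0
      rw [ddexp_zero lam k (Nat.pos_of_ne_zero hk0), zero_smul]
    · intro h
      exact absurd (Finset.mem_range.mpr hN) h
  have hEd : ∀ u : ℝ, HasDerivAt (fun v : ℝ => NormedSpace.exp (v • B))
      (B * NormedSpace.exp (u • B)) u := by
    intro u
    have h := hasDerivAt_exp_smul_const' (𝕂 := ℝ) B u
    exact h
  set Y : ℝ → Matrix (Fin N) (Fin N) ℂ :=
    fun u => NormedSpace.exp (u • B) * X u with hY
  have hYd : ∀ u : ℝ, HasDerivAt Y 0 u := by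
    intro u
    have h := (hEd u).mul (hXd u)
    refine h.congr_deriv (Eq.symm ?_)
    have hc : Commute B (NormedSpace.exp (u • B)) :=
      ((Commute.refl B).smul_right u).exp_right
    rw [mul_neg, ← mul_assoc, ← hc.eq, add_neg_cancel]
  have hconst : ∀ u : ℝ, Y u = Y 0 := fun u =>
    is_const_of_deriv_eq_zero (fun v => (hYd v).differentiableAt) (fun v => (hYd v).deriv) u 0
  have hY0 : Y 0 = 1 := by
    rw [hY]
    simp only [zero_smul, NormedSpace.exp_zero, one_mul, hX0]
  have h1 : NormedSpace.exp (t • B) * X t = 1 := (hconst t).trans hY0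
  have h2 : NormedSpace.exp ((-t) • B) * NormedSpace.exp (t • B) = 1 := by
    have h := NormedSpace.exp_add_of_commute (((Commute.refl B).smul_left (-t)).smul_right t)
    rw [← add_smul, neg_add_cancel, zero_smul, NormedSpace.exp_zero] at h
    exact h.symm
  calc NormedSpace.exp ((-t) • B)
      = NormedSpace.exp ((-t) • B) * (NormedSpace.exp (t • B) * X t) := by
        rw [h1, mul_one]
    _ = (NormedSpace.exp ((-t) • B) * NormedSpace.exp (t • B)) * X t := by
        rw [mul_assoc]
    _ = X t := by rw [h2, one_mul]

section Spec

open Polynomial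

lemma root_charpoly_mem_spectrum {N : ℕ} (B : Matrix (Fin N) (Fin N) ℂ) {μ : ℂ}
    (h : μ ∈ B.charpoly.roots) : μ ∈ spectrum ℂ B := by
  have hroot : B.charpoly.IsRoot μ := (Polynomial.mem_roots'.mp h).2
  rw [spectrum.mem_iff]
  intro hunit
  have hdet : (Matrix.scalar (Fin N) μ - B).det = 0 := by
    have h2 := hroot
    rwa [Matrix.charpoly, Polynomial.IsRoot, eval_det, Matrix.matPolyEquiv_charmatrix,
      Polynomial.eval_sub, Polynomial.eval_X, Polynomial.eval_C] at h2
  have halg : (algebraMap ℂ (Matrix (Fin N) (Fin N) ℂ)) μ = Matrix.scalar (Fin N) μ := rfl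
  rw [halg] at hunit
  have h3 := (Matrix.isUnit_iff_isUnit_det _).mp hunit
  rw [hdet] at h3
  exact h3.ne_zero rfl

lemma charpoly_eq_list_prod {N : ℕ} (B : Matrix (Fin N) (Fin N) ℂ) :
    B.charpoly = ((B.charpoly.roots.toList).map fun a => X - C a).prod := by
  have hsplit : B.charpoly.Splits := IsAlgClosed.splits _
  have hmonic := B.charpoly_monic
  have hfact := hsplit.eq_prod_roots_of_monic hmonic
  conv_lhs => rw [hfact]
  rw [← Multiset.coe_toList B.charpoly.roots, Multiset.map_coe, Multiset.prod_coe,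
    Multiset.coe_toList]

lemma aeval_list_prod {N : ℕ} (B : Matrix (Fin N) (Fin N) ℂ) :
    ((B.charpoly.roots.toList).map fun a => B - a • 1).prod = 0 := by
  have h0 : Polynomial.aeval B B.charpoly = 0 := Matrix.aeval_self_charpoly B
  conv_rhs => rw [← h0]
  conv_rhs => rw [charpoly_eq_list_prod B]
  rw [map_list_prod (Polynomial.aeval B), List.map_map]
  congr 1
  apply List.map_congr_left
  intro a _
  simp [Algebra.algebraMap_eq_smul_one]

end Spec

lemma pow_le_one_add_pow {x : ℝ} (hx : 0 ≤ x) {k N : ℕ} (hk : k ≤ N) :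
    x ^ k ≤ 1 + x ^ N := by
  rcases le_or_gt x 1 with h | h
  · have := pow_le_one₀ hx h (n := k)
    nlinarith [pow_nonneg hx N]
  · have h1 : x ^ k ≤ x ^ N := pow_le_pow_right₀ h.le hk
    nlinarith

/-- If every eigenvalue of `B ∈ M_N(ℂ)` has nonnegative real part, then
`‖e^{-tB}‖ ≤ C (1 + t^N ‖B‖^N)` for all `t ≥ 0`, where `C` depends only on `N`
(and the chosen norm). -/
theorem exp_neg_smul_norm_le_of_spectrum_re_nonneg (N : ℕ) :
    ∃ C : ℝ, 0 < C ∧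
      ∀ B : Matrix (Fin N) (Fin N) ℂ,
        (∀ z ∈ spectrum ℂ B, 0 ≤ z.re) →
          ∀ t : ℝ, 0 ≤ t →
            ‖NormedSpace.exp ((-t) • B)‖ ≤ C * (1 + t ^ N * ‖B‖ ^ N) := by
  refine ⟨(N : ℝ) * 2 ^ N + 1, by positivity, ?_⟩
  intro B hB t ht
  rcases Nat.eq_zero_or_pos N with hN | hN
  · subst hN
    have hexp : NormedSpace.exp ((-t) • B) = 0 := Subsingleton.elim _ _
    rw [hexp, norm_zero]
    positivity
  -- N ≥ 1
  haveI : Nonempty (Fin N) := ⟨⟨0, hN⟩⟩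
  set R : List ℂ := B.charpoly.roots.toList with hR
  have hlen : R.length = N := by
    rw [hR, Multiset.length_toList]
    have hsplit : B.charpoly.Splits := IsAlgClosed.splits _
    rw [(Polynomial.splits_iff_card_roots).mp hsplit, Matrix.charpoly_natDegree_eq_dim,
      Fintype.card_fin]
  set lam : ℕ → ℂ := fun k => R.getD k 0 with hlam
  have hspec : ∀ k, k < N → lam k ∈ spectrum ℂ B := by
    intro k hk
    have hkl : k < R.length := by rw [hlen]; exact hk
    have hmem : lam k ∈ R := by
      rw [hlam]
      simp only
      rw [List.getD_eq_getElem R 0 hkl]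
      exact List.getElem_mem hkl
    exact root_charpoly_mem_spectrum B
      (by rwa [hR, ← Multiset.mem_coe, Multiset.coe_toList] at hmem)
  have hlam0 : ∀ k, N ≤ k → lam k = 0 := by
    intro k hk
    rw [hlam]
    simp only
    rw [List.getD_eq_default]
    rw [hlen]
    exact hk
  have hRe : ∀ k, 0 ≤ (lam k).re := by
    intro k
    rcases lt_or_ge k N with hk | hk
    · exact hB _ (hspec k hk)
    · rw [hlam0 k hk]; simp
  have hlamnorm : ∀ k, ‖lam k‖ ≤ ‖B‖ := by
    intro k
    rcases lt_or_ge k N with hk | hk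
    · exact spectrum.norm_le_norm_of_mem (hspec k hk)
    · rw [hlam0 k hk, norm_zero]; exact norm_nonneg B
  have hCH : Pprod B lam N = 0 := by
    have hmapeq : (List.range N).map (fun j => B - lam j • 1)
        = R.map (fun a => B - a • 1) := by
      apply List.ext_getElem
      · simp [hlen]
      · intro i h1 h2
        simp only [List.getElem_map, List.getElem_range]
        congr 2
        rw [hlam]
        simp only
        rw [List.getD_eq_getElem R 0 (by simpa using h2)]
    rw [Pprod, hmapeq, aeval_list_prod]
  have hPnorm : ∀ k, ‖Pprod B lam k‖ ≤ (2 * ‖B‖) ^ k := by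
    intro k
    induction k with
    | zero => rw [Pprod_zero, pow_zero]; exact norm_one.le
    | succ k ih =>
      rw [Pprod_succ, pow_succ]
      refine (norm_mul_le _ _).trans (mul_le_mul ih ?_ (norm_nonneg _)
        (by positivity))
      refine (norm_sub_le _ _).trans ?_
      rw [norm_smul, norm_one, mul_one]
      have := hlamnorm k
      linarith
  rw [exp_neg_eq_sum B lam hN hCH t]
  refine (norm_sum_le _ _).trans ?_
  have hterm : ∀ k ∈ Finset.range N,
      ‖ddexp lam k t • Pprod B lam k‖ ≤ 2 ^ N * (1 + (t * ‖B‖) ^ N) := by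
    intro k hk
    rw [norm_smul]
    have h1 : ‖ddexp lam k t‖ * ‖Pprod B lam k‖ ≤ t ^ k * (2 * ‖B‖) ^ k :=
      mul_le_mul (ddexp_norm_le lam hRe k t ht) (hPnorm k) (norm_nonneg _)
        (pow_nonneg ht k)
    refine h1.trans ?_
    rw [← mul_pow]
    have h2 : (t * (2 * ‖B‖)) ^ k = 2 ^ k * (t * ‖B‖) ^ k := by
      rw [← mul_pow]; ring_nf
    rw [h2]
    have h3 : (t * ‖B‖) ^ k ≤ 1 + (t * ‖B‖) ^ N :=
      pow_le_one_add_pow (by positivity) (Finset.mem_range.mp hk).le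
    have h4 : (2:ℝ) ^ k ≤ 2 ^ N :=
      pow_le_pow_right₀ one_le_two (Finset.mem_range.mp hk).le
    have h5 : (0:ℝ) ≤ (t * ‖B‖) ^ k := by positivity
    nlinarith [pow_pos (show (0:ℝ) < 2 by norm_num) k]
  refine (Finset.sum_le_sum hterm).trans ?_
  rw [Finset.sum_const, Finset.card_range, nsmul_eq_mul]
  have hx : t ^ N * ‖B‖ ^ N = (t * ‖B‖) ^ N := (mul_pow t ‖B‖ N).symm
  rw [hx]
  have h6 : (0:ℝ) ≤ (t * ‖B‖) ^ N := by positivity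
  nlinarith [pow_pos (show (0:ℝ) < 2 by norm_num) N, Nat.cast_nonneg (α := ℝ) N]
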